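/- For square positive semi-definite matrices A and B of the same size, the trace of the matrix square root of A^{1/2} B A^{1/2} equals the sum of the square roots of the eigenvalues (counted with multiplicity) of the product AB. -/

import Mathlib

open Classical Matrix Polynomial

/-- The positive semidefinite square root of a real matrix (junk value `0` if not PSD). -/
noncomputable def psdSqrt {n : ℕ} (A : Matrix (Fin n) (Fin n) ℝ) : Matrix (Fin n) (Fin n) ℝ :=
  if h : A.PosSemidef then
    (h.1.eigenvectorUnitary : Matrix (Fin n) (Fin n) ℝ) *
      diagonal ((↑) ∘ (√·) ∘ h.1.eigenvalues) *
      (star h.1.eigenvectorUnitary : Matrix (Fin n) (Fin n) ℝ)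
  else 0

noncomputable def Matrix.PosSemidef.sqrt {n : ℕ} {A : Matrix (Fin n) (Fin n) ℝ}
    (h : A.PosSemidef) : Matrix (Fin n) (Fin n) ℝ :=
  (h.1.eigenvectorUnitary : Matrix (Fin n) (Fin n) ℝ) *
    diagonal ((↑) ∘ (√·) ∘ h.1.eigenvalues) *
    (star h.1.eigenvectorUnitary : Matrix (Fin n) (Fin n) ℝ)

lemma Matrix.PosSemidef.posSemidef_sqrt {n : ℕ} {A : Matrix (Fin n) (Fin n) ℝ}
    (hA : A.PosSemidef) : PosSemidef hA.sqrt := by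
  apply PosSemidef.mul_mul_conjTranspose_same
  refine posSemidef_diagonal_iff.mpr fun i ↦ ?_
  exact Real.sqrt_nonneg _

lemma Matrix.PosSemidef.sqrt_mul_self {n : ℕ} {A : Matrix (Fin n) (Fin n) ℝ}
    (hA : A.PosSemidef) : hA.sqrt * hA.sqrt = A := by
  let C : Matrix (Fin n) (Fin n) ℝ := hA.1.eigenvectorUnitary
  let E := diagonal ((↑) ∘ (√·) ∘ hA.1.eigenvalues : Fin n → ℝ)
  suffices C * (E * (star C * C) * E) * star C = A by
    rw [Matrix.PosSemidef.sqrt]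
    simpa only [← mul_assoc] using this
  have : star C * C = 1 := by simp [C]
  rw [this, mul_one]
  have : E * E = diagonal ((↑) ∘ hA.1.eigenvalues) := by
    rw [diagonal_mul_diagonal]
    congr! with v
    simp [Real.mul_self_sqrt (hA.eigenvalues_nonneg v)]
  rw [this]
  conv_rhs => rw [hA.1.spectral_theorem, Unitary.conjStarAlgAut_apply]
  rfl

lemma aux_charpoly_mul_comm {n : ℕ} (M N : Matrix (Fin n) (Fin n) ℝ) :
    (M * N).charpoly = (N * M).charpoly := by
  set K := FractionRing (Polynomial ℝ)
  have hinj : Function.Injective (algebraMap (Polynomial ℝ) K) :=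
    IsFractionRing.injective _ _
  apply hinj
  set φ : Polynomial ℝ →+* K := (algebraMap (Polynomial ℝ) K : Polynomial ℝ →+* K) with hφ
  set ψ : ℝ →+* K := φ.comp (Polynomial.C) with hψ
  have ht : φ X ≠ 0 := by
    intro h
    exact Polynomial.X_ne_zero (hinj (h.trans (map_zero φ).symm))
  have key : ∀ P Q : Matrix (Fin n) (Fin n) ℝ,
      φ ((P * Q).charpoly) =
        (φ X) ^ n * Matrix.det (1 - (φ X)⁻¹ • (P.map ψ * Q.map ψ)) := by
    intro P Q
    rw [Matrix.charpoly, RingHom.map_det, RingHom.mapMatrix_apply]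
    have h1 : (Matrix.charmatrix (P * Q)).map φ
        = φ X • (1 : Matrix (Fin n) (Fin n) K) - (P * Q).map ψ := by
      ext i j
      by_cases h : i = j
      · subst h
        simp [Matrix.charmatrix_apply, Matrix.map_apply, Matrix.one_apply, hψ]
      · simp [Matrix.charmatrix_apply, Matrix.map_apply, Matrix.one_apply, h,
          Matrix.diagonal_apply_ne _ h, hψ]
    have h2 : (P * Q).map ψ = P.map ψ * Q.map ψ := Matrix.map_mul
    have h3 : φ X • ((1 : Matrix (Fin n) (Fin n) K) - (φ X)⁻¹ • (P.map ψ * Q.map ψ))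
        = φ X • (1 : Matrix (Fin n) (Fin n) K) - (P.map ψ * Q.map ψ) := by
      rw [smul_sub, smul_smul, mul_inv_cancel₀ ht, one_smul]
    rw [h1, h2, ← h3, Matrix.det_smul]
    simp
  rw [key M N, key N M]
  congr 1
  rw [← smul_mul_assoc, Matrix.det_one_sub_mul_comm, mul_smul_comm]

lemma aux_charpoly_diagonal {n : ℕ} (d : Fin n → ℝ) :
    (Matrix.diagonal d).charpoly = ∏ i, (X - Polynomial.C (d i)) := by
  rw [Matrix.charpoly]
  have h : (Matrix.diagonal d).charmatrix
      = Matrix.diagonal (fun i => (X : ℝ[X]) - Polynomial.C (d i)) := by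
    ext i j
    by_cases h : i = j
    · subst h; simp
    · simp [h, Matrix.diagonal_apply_ne _ h]
  rw [h, Matrix.det_diagonal]

lemma aux_charpoly_hermitian {n : ℕ} {C : Matrix (Fin n) (Fin n) ℝ} (hC : C.IsHermitian) :
    C.charpoly = ∏ i, (X - Polynomial.C (hC.eigenvalues i)) := by
  have hU : (star (hC.eigenvectorUnitary : Matrix (Fin n) (Fin n) ℝ))
      * (hC.eigenvectorUnitary : Matrix (Fin n) (Fin n) ℝ) = 1 :=
    Matrix.mem_unitaryGroup_iff'.mp hC.eigenvectorUnitary.2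
  calc C.charpoly
      = ((hC.eigenvectorUnitary : Matrix (Fin n) (Fin n) ℝ)
          * Matrix.diagonal (RCLike.ofReal ∘ hC.eigenvalues)
          * star (hC.eigenvectorUnitary : Matrix (Fin n) (Fin n) ℝ)).charpoly := by
        rw [← Unitary.conjStarAlgAut_apply (S := ℝ), ← hC.spectral_theorem]
    _ = (Matrix.diagonal (RCLike.ofReal ∘ hC.eigenvalues)).charpoly := by
        rw [aux_charpoly_mul_comm, ← mul_assoc, hU, one_mul]
    _ = ∏ i, (X - Polynomial.C (hC.eigenvalues i)) := by
        rw [aux_charpoly_diagonal]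
        simp

lemma aux_trace_sqrt {n : ℕ} {C : Matrix (Fin n) (Fin n) ℝ} (hC : C.PosSemidef) :
    hC.sqrt.trace = ∑ i, Real.sqrt (hC.1.eigenvalues i) := by
  have hU : (star (hC.1.eigenvectorUnitary : Matrix (Fin n) (Fin n) ℝ))
      * (hC.1.eigenvectorUnitary : Matrix (Fin n) (Fin n) ℝ) = 1 :=
    Matrix.mem_unitaryGroup_iff'.mp hC.1.eigenvectorUnitary.2
  rw [Matrix.PosSemidef.sqrt, Matrix.trace_mul_comm, ← mul_assoc, hU, one_mul,
    Matrix.trace_diagonal]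
  simp

/-- For square PSD matrices `A`, `B`, the trace of the PSD square root of `A^{1/2} B A^{1/2}`
equals the sum of the square roots of the eigenvalues of `A * B`
(counted with algebraic multiplicity, i.e. the roots of its characteristic polynomial). -/
theorem trace_sqrt_eq_sum_sqrt_spec {n : ℕ}
    (A B : Matrix (Fin n) (Fin n) ℝ) (hA : A.PosSemidef) (hB : B.PosSemidef) :
    (psdSqrt (psdSqrt A * B * psdSqrt A)).trace
      = ((A * B).charpoly.roots.map Real.sqrt).sum := by
  have hSA : psdSqrt A = hA.sqrt := dif_pos hA
  set S := hA.sqrt with hS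
  have hSps : S.PosSemidef := hA.posSemidef_sqrt
  have hC : (S * B * S).PosSemidef := by
    have h := hB.mul_mul_conjTranspose_same S
    rwa [hSps.isHermitian.eq] at h
  have hpsd : psdSqrt (psdSqrt A * B * psdSqrt A) = hC.sqrt := by
    rw [hSA]; exact dif_pos hC
  have hcp : (A * B).charpoly = (S * B * S).charpoly := by
    have : A * B = S * (S * B) := by
      rw [← mul_assoc, hS, hA.sqrt_mul_self]
    rw [this, aux_charpoly_mul_comm, mul_assoc]
  rw [hpsd, hcp, aux_trace_sqrt hC, aux_charpoly_hermitian hC.1]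
  have hroots : (∏ i, ((X : ℝ[X]) - Polynomial.C (hC.1.eigenvalues i))).roots
      = Finset.univ.val.map hC.1.eigenvalues := by
    have := Polynomial.roots_multiset_prod_X_sub_C (Finset.univ.val.map hC.1.eigenvalues)
    rw [← this]
    congr 1
    rw [Finset.prod_eq_multiset_prod, Multiset.map_map]
    rfl
  rw [hroots, Multiset.map_map]
  rw [Finset.sum_eq_multiset_sum]
  rfl
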